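/- arXiv:1612.04541 — 6 statements merged into one kernel-verified Lean document; each statement's English description precedes it below -/
import Mathlib

section
/- (Lemma 3.3) Assume a₂₂ < 0 and a₃₃ > 0, and set q = a₂ − (a₂₃/a₃₃)a₃, so that ⟨q,q⟩ = a₂₂/a₃₃ < 0. Then the vector k = a₂/√(−a₂₂) + q/√(−⟨q,q⟩), representing the midpoint K of the segment A₂Q, satisfies ⟨k,k⟩ = −2·(1 + √(1/a₃₃)). -/
open Real Matrix

/-- The Coxeter–Schläfli matrix of the complete orthoscheme `W_{uvw}`. -/
noncomputable def CSmatrix (u v w : ℝ) : Matrix (Fin 4) (Fin 4) ℝ :=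
  !![1, -cos (π/u), 0, 0;
     -cos (π/u), 1, -cos (π/v), 0;
     0, -cos (π/v), 1, -cos (π/w);
     0, 0, -cos (π/w), 1]

/-- The inverse of the Coxeter–Schläfli matrix; its entries are the `a_{ij}`. -/
noncomputable def CSinv (u v w : ℝ) : Matrix (Fin 4) (Fin 4) ℝ :=
  (CSmatrix u v w)⁻¹

/-!
Since `b` is tridiagonal, `a b = 1` and `b a = 1` give `a₂₃ = cos (π/w) a₂₂` and
`a₃₃ = 1 + cos (π/w) a₂₃`, hence `a₂₂ a₃₃ - a₂₃² = a₂₂`. The vector `q` is the component of `a₂`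
orthogonal to `a₃`, so `⟨q,q⟩ = ⟨a₂,q⟩ = a₂₂ - a₂₃²/a₃₃ = a₂₂/a₃₃`. Normalising two timelike
vectors `x, y` with `⟨x,y⟩ = ⟨y,y⟩` to `x̂, ŷ` gives `⟨x̂ + ŷ, x̂ + ŷ⟩ = -2 + 2⟨x̂,ŷ⟩`, and
`⟨x̂,ŷ⟩ = -√(⟨y,y⟩/⟨x,x⟩)`, which here is `-√(1/a₃₃)`.
-/

namespace LinearMap.BilinForm

section Projection

variable {K V : Type*} [Field K] [AddCommGroup V] [Module K V]
  {B : LinearMap.BilinForm K V}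

theorem apply_sub_proj (x y : V) :
    B x (x - (B x y / B y y) • y) = B x x - B x y ^ 2 / B y y := by
  simp only [map_sub, map_smul, smul_eq_mul]
  ring

theorem apply_sub_proj_sub_proj (hB : B.IsSymm) (x y : V) :
    B (x - (B x y / B y y) • y) (x - (B x y / B y y) • y) = B x x - B x y ^ 2 / B y y := by
  rcases eq_or_ne (B y y) 0 with hy | hy
  · simp [hy]
  simp only [map_sub, map_smul, LinearMap.sub_apply, LinearMap.smul_apply, smul_eq_mul,
    hB.eq y x]
  field_simp
  ring

end Projection

variable {V : Type*} [AddCommGroup V] [Module ℝ V] {B : LinearMap.BilinForm ℝ V}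

theorem apply_normalize_self {x : V} (hx : B x x < 0) :
    B ((√(-B x x))⁻¹ • x) ((√(-B x x))⁻¹ • x) = -1 := by
  have hs : √(-B x x) ^ 2 = -B x x := sq_sqrt (by linarith)
  have hs0 : √(-B x x) ≠ 0 := (sqrt_pos.mpr (by linarith)).ne'
  simp only [map_smul, LinearMap.smul_apply, smul_eq_mul]
  field_simp
  linarith

theorem apply_normalize_normalize {x y : V} (hx : B x x < 0) (hy : B y y < 0)
    (hxy : B x y = B y y) :
    B ((√(-B x x))⁻¹ • x) ((√(-B y y))⁻¹ • y) = -√(B y y / B x x) := by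
  have hratio : 0 < B y y / B x x := div_pos_of_neg_of_neg hy hx
  have hprod : √(-B x x) * √(-B y y) = -B x x * √(B y y / B x x) := by
    rw [← sqrt_mul (by linarith), ← sqrt_sq (x := -B x x) (by linarith), ← sqrt_mul (sq_nonneg _),
      sqrt_sq (by linarith)]
    congr 1
    field_simp
  have hr : √(B y y / B x x) ^ 2 = B y y / B x x := sq_sqrt hratio.le
  have hr0 : √(B y y / B x x) ≠ 0 := (sqrt_pos.mpr hratio).ne'
  simp only [map_smul, LinearMap.smul_apply, smul_eq_mul, hxy]
  rw [← mul_assoc, ← mul_inv, mul_comm (√(-B y y)), hprod]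
  field_simp
  rw [hr]

theorem apply_normalize_add_normalize (hB : B.IsSymm) {x y : V}
    (hx : B x x < 0) (hy : B y y < 0) (hxy : B x y = B y y) :
    B ((√(-B x x))⁻¹ • x + (√(-B y y))⁻¹ • y) ((√(-B x x))⁻¹ • x + (√(-B y y))⁻¹ • y) =
      -2 * (1 + √(B y y / B x x)) := by
  simp only [map_add, LinearMap.add_apply]
  rw [hB.eq ((√(-B y y))⁻¹ • y), apply_normalize_self hx, apply_normalize_self hy,
    apply_normalize_normalize hx hy hxy]
  ring

end LinearMap.BilinForm

section CoxeterSchlafli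

variable {u v w : ℝ}

theorem CSinv_mul_CSmatrix (hdet : (CSmatrix u v w).det ≠ 0) :
    CSinv u v w * CSmatrix u v w = 1 :=
  nonsing_inv_mul _ (isUnit_iff_ne_zero.mpr hdet)

theorem CSmatrix_mul_CSinv (hdet : (CSmatrix u v w).det ≠ 0) :
    CSmatrix u v w * CSinv u v w = 1 :=
  mul_nonsing_inv _ (isUnit_iff_ne_zero.mpr hdet)

theorem CSinv_two_three (hdet : (CSmatrix u v w).det ≠ 0) :
    CSinv u v w 2 3 = cos (π / w) * CSinv u v w 2 2 := by
  have h : CSinv u v w 2 2 * -cos (π / w) + CSinv u v w 2 3 = 0 := by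
    simpa [mul_apply, Fin.sum_univ_four, CSmatrix] using
      congrFun (congrFun (CSinv_mul_CSmatrix hdet) 2) 3
  linarith

theorem CSinv_three_three (hdet : (CSmatrix u v w).det ≠ 0) :
    CSinv u v w 3 3 = 1 + cos (π / w) * CSinv u v w 2 3 := by
  have h : -cos (π / w) * CSinv u v w 2 3 + CSinv u v w 3 3 = 1 := by
    simpa [mul_apply, Fin.sum_univ_four, CSmatrix] using
      congrFun (congrFun (CSmatrix_mul_CSinv hdet) 3) 3
  linarith

theorem CSinv_minor_two_three (hdet : (CSmatrix u v w).det ≠ 0) :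
    CSinv u v w 2 2 * CSinv u v w 3 3 - CSinv u v w 2 3 ^ 2 = CSinv u v w 2 2 := by
  rw [CSinv_three_three hdet, sq]
  nth_rw 3 [CSinv_two_three hdet]
  ring

end CoxeterSchlafli

open LinearMap.BilinForm in
theorem stmt5_general (u v w : ℝ)
    (hdet : (CSmatrix u v w).det ≠ 0)
    {V : Type*} [AddCommGroup V] [Module ℝ V]
    (Bf : LinearMap.BilinForm ℝ V)
    (hsymm : ∀ x y : V, Bf x y = Bf y x)
    (a : Fin 4 → V)
    (hGram : ∀ i j : Fin 4, Bf (a i) (a j) = CSinv u v w i j)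
    (h22 : CSinv u v w 2 2 < 0) (h33 : 0 < CSinv u v w 3 3)
    (q : V) (hq : q = a 2 - (CSinv u v w 2 3 / CSinv u v w 3 3) • a 3)
    (k : V)
    (hk : k = (Real.sqrt (-(CSinv u v w 2 2)))⁻¹ • a 2 + (Real.sqrt (-(Bf q q)))⁻¹ • q) :
    Bf q q = CSinv u v w 2 2 / CSinv u v w 3 3 ∧
    Bf q q < 0 ∧
    Bf k k = -2 * (1 + Real.sqrt (1 / CSinv u v w 3 3)) := by
  have hB : Bf.IsSymm := ⟨hsymm⟩
  have hschur : CSinv u v w 2 2 - CSinv u v w 2 3 ^ 2 / CSinv u v w 3 3 =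
      CSinv u v w 2 2 / CSinv u v w 3 3 := by
    field_simp
    linarith [CSinv_minor_two_three hdet]
  rw [← hGram 2 3, ← hGram 3 3] at hq
  have hqq : Bf q q = CSinv u v w 2 2 / CSinv u v w 3 3 := by
    rw [hq, apply_sub_proj_sub_proj hB, hGram, hGram, hGram, hschur]
  have ha₂q : Bf (a 2) q = Bf q q := by
    rw [hqq, hq, apply_sub_proj, hGram, hGram, hGram, hschur]
  have hqq_neg : Bf q q < 0 := hqq ▸ div_neg_of_neg_of_pos h22 h33
  refine ⟨hqq, hqq_neg, ?_⟩
  rw [hk, ← hGram 2 2, apply_normalize_add_normalize hB (by rwa [hGram]) hqq_neg ha₂q, hqq,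
    hGram, div_div_cancel_left' h22.ne, one_div]

theorem stmt5 (u v w : ℝ) (hu : 3 ≤ u) (hv : 3 ≤ v) (hw : 3 ≤ w)
    (hdet : (CSmatrix u v w).det ≠ 0)
    {V : Type*} [AddCommGroup V] [Module ℝ V]
    (Bf : LinearMap.BilinForm ℝ V)
    (hsymm : ∀ x y : V, Bf x y = Bf y x)
    (a : Fin 4 → V)
    (hGram : ∀ i j : Fin 4, Bf (a i) (a j) = CSinv u v w i j)
    (h22 : CSinv u v w 2 2 < 0) (h33 : 0 < CSinv u v w 3 3)
    (q : V) (hq : q = a 2 - (CSinv u v w 2 3 / CSinv u v w 3 3) • a 3)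
    (k : V)
    (hk : k = (Real.sqrt (-(CSinv u v w 2 2)))⁻¹ • a 2 + (Real.sqrt (-(Bf q q)))⁻¹ • q) :
    Bf q q = CSinv u v w 2 2 / CSinv u v w 3 3 ∧
    Bf q q < 0 ∧
    Bf k k = -2 * (1 + Real.sqrt (1 / CSinv u v w 3 3)) :=
  stmt5_general u v w hdet Bf hsymm a hGram h22 h33 q hq k hk
end

section
/- (Lemma 3.4) Assume u = w and the hyperbolicity condition B < 0 (equivalently sin(π/u)sin(π/w) < cos(π/v)). Then the midpoint vectors f₀₃ = a₀ + a₃ and f₁₂ = a₁ + a₂ satisfy ⟨f₀₃, f₀₃⟩ = 2(a₀₀ + a₀₃) < 0 and ⟨f₁₂, f₁₂⟩ = 2(a₁₁ + a₁₂) < 0; in particular both F₀₃ and F₁₂ represent proper points of hyperbolic space. -/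
open Real Matrix

/-!
The Gram matrix `a` is symmetric, and for `u = w` it is also invariant under the reversal
`i ↦ 3 - i` of the indices, because `b` is. Hence `⟨a₀ + a₃, a₀ + a₃⟩ = 2 (a₀₀ + a₀₃)` and
`⟨a₁ + a₂, a₁ + a₂⟩ = 2 (a₁₁ + a₁₂)`. Writing `c = cos (π/u)`, `d = cos (π/v)`, the adjugate of `b`
gives `a₀₀ + a₀₃ = (1 - d)(1 + d - c²) / B` and `a₁₁ + a₁₂ = (1 - c² + d) / B`; both numerators are
positive since `0 < d < 1` for `v > 2`, so `B < 0` makes both quantities negative.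
-/

lemma cos_pi_div_mem_Ioo {v : ℝ} (hv : 2 < v) : cos (π / v) ∈ Set.Ioo 0 1 := by
  have hpos : 0 < π / v := div_pos pi_pos (by linarith)
  have hlt : π / v < π / 2 := div_lt_div_of_pos_left pi_pos two_pos hv
  refine ⟨cos_pos_of_mem_Ioo ⟨by linarith, hlt⟩, ?_⟩
  simpa using cos_lt_cos_of_nonneg_of_le_pi le_rfl (by linarith [pi_pos]) hpos

lemma LinearMap.BilinForm.apply_add_add_of_gram {R V ι : Type*} [CommRing R] [AddCommGroup V]
    [Module R V] (Bf : LinearMap.BilinForm R V) (a : ι → V) (G : Matrix ι ι R)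
    (hGram : ∀ i j, Bf (a i) (a j) = G i j) (i j : ι) :
    Bf (a i + a j) (a i + a j) = G i i + G i j + G j i + G j j := by
  simp only [map_add, LinearMap.add_apply, hGram]
  ring

section CoxeterSchlafli

variable (u v w : ℝ)

lemma CSmatrix_transpose : (CSmatrix u v w)ᵀ = CSmatrix u v w := by
  ext i j
  fin_cases i <;> fin_cases j <;> rfl

lemma CSmatrix_submatrix_rev :
    (CSmatrix u v w).submatrix Fin.rev Fin.rev = CSmatrix w v u := by
  ext i j
  fin_cases i <;> fin_cases j <;> rfl

lemma CSinv_symm (i j : Fin 4) : CSinv u v w j i = CSinv u v w i j := by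
  rw [CSinv, ← transpose_apply (CSmatrix u v w)⁻¹, transpose_nonsing_inv, CSmatrix_transpose]

lemma CSinv_rev (i j : Fin 4) : CSinv u v w i.rev j.rev = CSinv w v u i j := by
  rw [CSinv, CSinv, ← CSmatrix_submatrix_rev u v w]
  exact congrFun₂ (inv_submatrix_equiv (CSmatrix u v w) Fin.revPerm Fin.revPerm).symm i j

lemma CSmatrix_det :
    (CSmatrix u v w).det =
      1 - cos (π/u)^2 - cos (π/v)^2 - cos (π/w)^2 + cos (π/u)^2 * cos (π/w)^2 := by
  simp [CSmatrix, det_succ_row_zero, Fin.sum_univ_succ, Fin.succAbove]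
  ring

noncomputable def CSadj : Matrix (Fin 4) (Fin 4) ℝ :=
  let c := cos (π/u); let d := cos (π/v); let e := cos (π/w)
  !![1-d^2-e^2, c*(1-e^2), c*d, c*d*e;
     c*(1-e^2), 1-e^2, d, d*e;
     c*d, d, 1-c^2, e*(1-c^2);
     c*d*e, d*e, e*(1-c^2), 1-c^2-d^2]

lemma CSmatrix_mul_CSadj : CSmatrix u v w * CSadj u v w = (CSmatrix u v w).det • 1 := by
  rw [CSmatrix_det]
  ext i j
  fin_cases i <;> fin_cases j <;>
    simp [CSmatrix, CSadj, mul_apply, Fin.sum_univ_four, one_apply] <;> ring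

lemma CSinv_eq_smul_CSadj : CSinv u v w = (CSmatrix u v w).det⁻¹ • CSadj u v w := by
  by_cases hdet : (CSmatrix u v w).det = 0
  · rw [CSinv, nonsing_inv_apply_not_isUnit _ (by simp [hdet]), hdet, _root_.inv_zero, zero_smul]
  · refine inv_eq_right_inv ?_
    rw [Matrix.mul_smul, CSmatrix_mul_CSadj, smul_smul, inv_mul_cancel₀ hdet, one_smul]

lemma CSinv_one_one_add_one_two :
    CSinv u v w 1 1 + CSinv u v w 1 2 = (1 - cos (π/w)^2 + cos (π/v)) / (CSmatrix u v w).det := by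
  simp only [CSinv_eq_smul_CSadj, CSadj, Matrix.smul_apply, of_apply, cons_val', cons_val_one,
    cons_val_zero, cons_val_fin_one, smul_eq_mul, cons_val]
  ring

lemma CSinv_zero_zero_add_zero_three_of_eq :
    CSinv u v u 0 0 + CSinv u v u 0 3 =
      (1 - cos (π/v)) * (1 + cos (π/v) - cos (π/u)^2) / (CSmatrix u v u).det := by
  simp only [CSinv_eq_smul_CSadj, CSadj, Matrix.smul_apply, of_apply, cons_val', cons_val_zero,
    cons_val_fin_one, smul_eq_mul, cons_val]
  ring

end CoxeterSchlafli

theorem stmt6_general (u v w : ℝ) (hv : 3 ≤ v)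
    {V : Type*} [AddCommGroup V] [Module ℝ V]
    (Bf : LinearMap.BilinForm ℝ V)
    (a : Fin 4 → V)
    (hGram : ∀ i j : Fin 4, Bf (a i) (a j) = CSinv u v w i j)
    (huw : u = w) (hBneg : (CSmatrix u v w).det < 0) :
    Bf (a 0 + a 3) (a 0 + a 3) = 2 * (CSinv u v w 0 0 + CSinv u v w 0 3) ∧
    2 * (CSinv u v w 0 0 + CSinv u v w 0 3) < 0 ∧
    Bf (a 1 + a 2) (a 1 + a 2) = 2 * (CSinv u v w 1 1 + CSinv u v w 1 2) ∧
    2 * (CSinv u v w 1 1 + CSinv u v w 1 2) < 0 ∧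
    Bf (a 0 + a 3) (a 0 + a 3) < 0 ∧
    Bf (a 1 + a 2) (a 1 + a 2) < 0 := by
  subst huw
  obtain ⟨hd0, hd1⟩ := cos_pi_div_mem_Ioo (show 2 < v by linarith)
  have hc := cos_sq_le_one (π / u)
  have hf03 : Bf (a 0 + a 3) (a 0 + a 3) = 2 * (CSinv u v u 0 0 + CSinv u v u 0 3) := by
    have h33 : CSinv u v u 3 3 = CSinv u v u 0 0 := CSinv_rev u v u 0 0
    rw [Bf.apply_add_add_of_gram a _ hGram, CSinv_symm u v u 0 3, h33]
    ring
  have hf12 : Bf (a 1 + a 2) (a 1 + a 2) = 2 * (CSinv u v u 1 1 + CSinv u v u 1 2) := by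
    have h22 : CSinv u v u 2 2 = CSinv u v u 1 1 := CSinv_rev u v u 1 1
    rw [Bf.apply_add_add_of_gram a _ hGram, CSinv_symm u v u 1 2, h22]
    ring
  have hneg03 : 2 * (CSinv u v u 0 0 + CSinv u v u 0 3) < 0 := by
    rw [CSinv_zero_zero_add_zero_three_of_eq]
    exact mul_neg_of_pos_of_neg two_pos (div_neg_of_pos_of_neg (by nlinarith) hBneg)
  have hneg12 : 2 * (CSinv u v u 1 1 + CSinv u v u 1 2) < 0 := by
    rw [CSinv_one_one_add_one_two]
    exact mul_neg_of_pos_of_neg two_pos (div_neg_of_pos_of_neg (by linarith) hBneg)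
  exact ⟨hf03, hneg03, hf12, hneg12, hf03 ▸ hneg03, hf12 ▸ hneg12⟩

theorem stmt6 (u v w : ℝ) (hu : 3 ≤ u) (hv : 3 ≤ v) (hw : 3 ≤ w)
    (hdet : (CSmatrix u v w).det ≠ 0)
    {V : Type*} [AddCommGroup V] [Module ℝ V]
    (Bf : LinearMap.BilinForm ℝ V)
    (hsymm : ∀ x y : V, Bf x y = Bf y x)
    (a : Fin 4 → V)
    (hGram : ∀ i j : Fin 4, Bf (a i) (a j) = CSinv u v w i j)
    (huw : u = w) (hBneg : (CSmatrix u v w).det < 0) :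
    Bf (a 0 + a 3) (a 0 + a 3) = 2 * (CSinv u v w 0 0 + CSinv u v w 0 3) ∧
    2 * (CSinv u v w 0 0 + CSinv u v w 0 3) < 0 ∧
    Bf (a 1 + a 2) (a 1 + a 2) = 2 * (CSinv u v w 1 1 + CSinv u v w 1 2) ∧
    2 * (CSinv u v w 1 1 + CSinv u v w 1 2) < 0 ∧
    Bf (a 0 + a 3) (a 0 + a 3) < 0 ∧
    Bf (a 1 + a 2) (a 1 + a 2) < 0 :=
  stmt6_general u v w hv Bf a hGram huw hBneg
end

section
/- (Distance formula (4.3), edge A₃A₂) Assume B < 0 and sin²(π/u) > cos²(π/v) (so that a₂₂ < 0 and a₃₃ < 0, i.e. A₂ and A₃ are proper points). Then −a₂₃/√(a₂₂·a₃₃) = sin(π/u)·cos(π/w)/√(sin²(π/u) − cos²(π/v)) = √(1 − 1/a₃₃). (This quantity is cosh of the hyperbolic distance between the vertices A₃ and A₂ of the orthoscheme W_{uvw}.) -/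
open Real Matrix

/-!
With `a, b, c` the cosines of `π/u, π/v, π/w` and `s = sin (π/u)`, so that `s² = 1 - a²`,
the cofactors of the Coxeter–Schläfli matrix give `a₂₂ = s²/B`, `a₃₃ = (s² - b²)/B` and
`a₂₃ = c s²/B`, while `B = s²(1 - c²) - b²`. Hence for `B < 0` both diagonal entries are
negative, `a₂₂ a₃₃ = (s √(s² - b²) / B)²` gives the first formula, and
`1 - 1/a₃₃ = (s² - b² - B)/(s² - b²) = (s c)²/(s² - b²)` gives the second.
-/

theorem Matrix.inv_apply_eq_adjugate_div_det {n α : Type*} [Fintype n] [DecidableEq n] [Field α]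
    (A : Matrix n n α) (i j : n) : A⁻¹ i j = A.adjugate i j / A.det := by
  rw [inv_def, Ring.inverse_eq_inv', smul_apply, smul_eq_mul, div_eq_inv_mul]

def pathGram (a b c : ℝ) : Matrix (Fin 4) (Fin 4) ℝ :=
  !![1, -a, 0, 0;
     -a, 1, -b, 0;
     0, -b, 1, -c;
     0, 0, -c, 1]

theorem CSmatrix_eq_pathGram (u v w : ℝ) :
    CSmatrix u v w = pathGram (cos (π/u)) (cos (π/v)) (cos (π/w)) :=
  rfl

namespace pathGram

variable (a b c : ℝ)

theorem det_eq : (pathGram a b c).det = (1 - a ^ 2) * (1 - c ^ 2) - b ^ 2 := by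
  simp [pathGram, det_succ_row_zero, Fin.sum_univ_succ, Fin.succAbove]
  ring

theorem adjugate_two_two : (pathGram a b c).adjugate 2 2 = 1 - a ^ 2 := by
  simp [adjugate_apply, pathGram, det_succ_row_zero, Fin.sum_univ_succ, Fin.succAbove,
    updateRow_apply, Pi.single_apply]
  ring

theorem adjugate_three_three : (pathGram a b c).adjugate 3 3 = 1 - a ^ 2 - b ^ 2 := by
  simp [adjugate_apply, pathGram, det_succ_row_zero, Fin.sum_univ_succ, Fin.succAbove,
    updateRow_apply, Pi.single_apply]
  ring

theorem adjugate_two_three : (pathGram a b c).adjugate 2 3 = c * (1 - a ^ 2) := by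
  simp [adjugate_apply, pathGram, det_succ_row_zero, Fin.sum_univ_succ, Fin.succAbove,
    updateRow_apply, Pi.single_apply]
  ring

end pathGram

namespace pathGram

variable {a b c s : ℝ}

theorem inv_two_two (hs : s ^ 2 = 1 - a ^ 2) :
    (pathGram a b c)⁻¹ 2 2 = s ^ 2 / (pathGram a b c).det := by
  rw [inv_apply_eq_adjugate_div_det, adjugate_two_two, hs]

theorem inv_three_three (hs : s ^ 2 = 1 - a ^ 2) :
    (pathGram a b c)⁻¹ 3 3 = (s ^ 2 - b ^ 2) / (pathGram a b c).det := by
  rw [inv_apply_eq_adjugate_div_det, adjugate_three_three, hs]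

theorem inv_two_three (hs : s ^ 2 = 1 - a ^ 2) :
    (pathGram a b c)⁻¹ 2 3 = c * s ^ 2 / (pathGram a b c).det := by
  rw [inv_apply_eq_adjugate_div_det, adjugate_two_three, hs]

theorem inv_two_two_neg (hs : s ^ 2 = 1 - a ^ 2) (hs₀ : s ≠ 0) (hdet : (pathGram a b c).det < 0) :
    (pathGram a b c)⁻¹ 2 2 < 0 := by
  rw [inv_two_two hs]
  exact div_neg_of_pos_of_neg (by positivity) hdet

theorem inv_three_three_neg (hs : s ^ 2 = 1 - a ^ 2) (hb : b ^ 2 < s ^ 2)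
    (hdet : (pathGram a b c).det < 0) : (pathGram a b c)⁻¹ 3 3 < 0 := by
  rw [inv_three_three hs]
  exact div_neg_of_pos_of_neg (by linarith) hdet

theorem neg_inv_two_three_div_sqrt (hs : s ^ 2 = 1 - a ^ 2) (hs₀ : 0 < s) (hb : b ^ 2 < s ^ 2)
    (hdet : (pathGram a b c).det < 0) :
    -(pathGram a b c)⁻¹ 2 3 / √((pathGram a b c)⁻¹ 2 2 * (pathGram a b c)⁻¹ 3 3) =
      s * c / √(s ^ 2 - b ^ 2) := by
  have hP : 0 < √(s ^ 2 - b ^ 2) := sqrt_pos.mpr (by linarith)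
  have hprod : (pathGram a b c)⁻¹ 2 2 * (pathGram a b c)⁻¹ 3 3 =
      (s * √(s ^ 2 - b ^ 2) / (pathGram a b c).det) ^ 2 := by
    rw [inv_two_two hs, inv_three_three hs, div_pow, mul_pow, sq_sqrt (by linarith)]
    ring
  rw [hprod, sqrt_sq_eq_abs, abs_of_neg (div_neg_of_pos_of_neg (by positivity) hdet),
    inv_two_three hs]
  field_simp [hdet.ne]

theorem mul_div_sqrt_eq_sqrt_one_sub_inv_inv_three_three (hs : s ^ 2 = 1 - a ^ 2) (hs₀ : 0 ≤ s)
    (hc : 0 ≤ c) (hb : b ^ 2 < s ^ 2) :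
    s * c / √(s ^ 2 - b ^ 2) = √(1 - 1 / (pathGram a b c)⁻¹ 3 3) := by
  have hP : 0 < s ^ 2 - b ^ 2 := by linarith
  have h : 1 - 1 / (pathGram a b c)⁻¹ 3 3 = (s * c / √(s ^ 2 - b ^ 2)) ^ 2 := by
    rw [inv_three_three hs, one_div_div, det_eq, ← hs, div_pow, sq_sqrt hP.le]
    field_simp
    ring
  rw [h, sqrt_sq (by positivity)]

end pathGram

theorem sin_pi_div_pos {x : ℝ} (hx : 1 < x) : 0 < sin (π / x) :=
  sin_pos_of_pos_of_lt_pi (by positivity) (div_lt_self pi_pos hx)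

theorem cos_pi_div_nonneg {x : ℝ} (hx : 2 ≤ x) : 0 ≤ cos (π / x) := by
  apply cos_nonneg_of_mem_Icc
  constructor
  · linarith [show 0 < π / x by positivity, pi_pos]
  · exact div_le_div_of_nonneg_left pi_pos.le two_pos hx

theorem stmt8_general (u v w : ℝ) (hu : 3 ≤ u) (hw : 3 ≤ w)
    (hBneg : (CSmatrix u v w).det < 0)
    (h1 : cos (π/v) ^ 2 < sin (π/u) ^ 2) :
    CSinv u v w 2 2 < 0 ∧ CSinv u v w 3 3 < 0 ∧
    -CSinv u v w 2 3 / Real.sqrt (CSinv u v w 2 2 * CSinv u v w 3 3) =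
      sin (π/u) * cos (π/w) / Real.sqrt (sin (π/u) ^ 2 - cos (π/v) ^ 2) ∧
    sin (π/u) * cos (π/w) / Real.sqrt (sin (π/u) ^ 2 - cos (π/v) ^ 2) =
      Real.sqrt (1 - 1 / CSinv u v w 3 3) := by
  rw [CSmatrix_eq_pathGram] at hBneg
  have hs := sin_sq (π/u)
  have hs₀ := sin_pi_div_pos (by linarith : (1 : ℝ) < u)
  exact ⟨pathGram.inv_two_two_neg hs hs₀.ne' hBneg, pathGram.inv_three_three_neg hs h1 hBneg,
    pathGram.neg_inv_two_three_div_sqrt hs hs₀ h1 hBneg,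
    pathGram.mul_div_sqrt_eq_sqrt_one_sub_inv_inv_three_three hs hs₀.le
      (cos_pi_div_nonneg (by linarith)) h1⟩

theorem stmt8 (u v w : ℝ) (hu : 3 ≤ u) (hv : 3 ≤ v) (hw : 3 ≤ w)
    (hBneg : (CSmatrix u v w).det < 0)
    (h1 : cos (π/v) ^ 2 < sin (π/u) ^ 2) :
    CSinv u v w 2 2 < 0 ∧ CSinv u v w 3 3 < 0 ∧
    -CSinv u v w 2 3 / Real.sqrt (CSinv u v w 2 2 * CSinv u v w 3 3) =
      sin (π/u) * cos (π/w) / Real.sqrt (sin (π/u) ^ 2 - cos (π/v) ^ 2) ∧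
    sin (π/u) * cos (π/w) / Real.sqrt (sin (π/u) ^ 2 - cos (π/v) ^ 2) =
      Real.sqrt (1 - 1 / CSinv u v w 3 3) :=
  stmt8_general u v w hu hw hBneg h1
end

section
/- (Distance formula (4.4), segment A₃F₁₂) Assume u = w, B < 0, and sin²(π/u) > cos²(π/v) (so a₃₃ < 0 and a₁₂ + a₂₂ < 0). Then for the midpoint vector f₁₂ = a₁ + a₂ one has −⟨a₃, f₁₂⟩/√(⟨a₃,a₃⟩·⟨f₁₂,f₁₂⟩) = −(a₁₃ + a₂₃)/√(2·a₃₃·(a₁₂ + a₂₂)) = √(1/2 + (a₀₃ − 1)/(2a₃₃)). (This quantity is cosh of the hyperbolic distance from the vertex A₃ to the point F₁₂ of W_{uvw}.) -/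
open Real Matrix

/-!
With `c = cos (π/u) = cos (π/w)`, `d = cos (π/v)` and `B = (1 - c²)² - d²`, the adjugate of the
Coxeter–Schläfli matrix gives `a₁₁ = a₂₂`, `a₁₃ + a₂₃ = c (a₁₂ + a₂₂)` and
`a₃₃ + a₀₃ - 1 = c² (a₁₂ + a₂₂)`. The first identity turns `⟨f₁₂, f₁₂⟩` into `2 (a₁₂ + a₂₂)`,
and the other two make the square of the left-hand side equal to `1/2 + (a₀₃ - 1) / (2 a₃₃)`.
Signs: `c, d > 0` since `u, v ≥ 3`, while `a₃₃ = (sin²(π/u) - d²) / B` and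
`a₁₂ + a₂₂ = (d + sin²(π/u)) / B` are negative because `B < 0`.
-/

lemma cos_pi_div_pos {x : ℝ} (hx : 2 < x) : 0 < cos (π / x) := by
  have hx0 : 0 < x := by linarith
  refine cos_pos_of_mem_Ioo ⟨?_, div_lt_div_of_pos_left pi_pos two_pos hx⟩
  linarith [div_pos pi_pos hx0, pi_pos]

lemma CSmatrix_isSymm (u v w : ℝ) : (CSmatrix u v w).IsSymm := by
  ext i j
  fin_cases i <;> fin_cases j <;> rfl

lemma CSinv_apply_comm (u v w : ℝ) (i j : Fin 4) : CSinv u v w i j = CSinv u v w j i :=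
  (CSmatrix_isSymm u v w).inv.apply j i

lemma det_CSmatrix (u v w : ℝ) :
    (CSmatrix u v w).det =
      1 - cos (π/u)^2 - cos (π/v)^2 - cos (π/w)^2 + cos (π/u)^2 * cos (π/w)^2 := by
  simp [CSmatrix, det_succ_row_zero, Fin.sum_univ_succ, Fin.succAbove]
  ring

noncomputable def CSadjugate (u v w : ℝ) : Matrix (Fin 4) (Fin 4) ℝ :=
  !![1 - cos (π/v)^2 - cos (π/w)^2, cos (π/u) * (1 - cos (π/w)^2),
      cos (π/u) * cos (π/v), cos (π/u) * cos (π/v) * cos (π/w);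
    cos (π/u) * (1 - cos (π/w)^2), 1 - cos (π/w)^2,
      cos (π/v), cos (π/v) * cos (π/w);
    cos (π/u) * cos (π/v), cos (π/v),
      1 - cos (π/u)^2, (1 - cos (π/u)^2) * cos (π/w);
    cos (π/u) * cos (π/v) * cos (π/w), cos (π/v) * cos (π/w),
      (1 - cos (π/u)^2) * cos (π/w), 1 - cos (π/u)^2 - cos (π/v)^2]

lemma CSmatrix_mul_CSadjugate (u v w : ℝ) :
    CSmatrix u v w * CSadjugate u v w = (CSmatrix u v w).det • 1 := by
  rw [det_CSmatrix]
  ext i j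
  fin_cases i <;> fin_cases j <;>
    simp [CSmatrix, CSadjugate, mul_apply, one_apply, Fin.sum_univ_four] <;> ring

lemma CSinv_eq (u v w : ℝ) (hdet : (CSmatrix u v w).det ≠ 0) :
    CSinv u v w = (CSmatrix u v w).det⁻¹ • CSadjugate u v w := by
  apply inv_eq_right_inv
  rw [Matrix.mul_smul, CSmatrix_mul_CSadjugate, smul_smul, inv_mul_cancel₀ hdet, one_smul]

section SymmetricOrthoscheme

variable {u v : ℝ} (hdet : (CSmatrix u v u).det ≠ 0)
include hdet

lemma CSinv_one_one_eq_two_two : CSinv u v u 1 1 = CSinv u v u 2 2 := by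
  simp [CSinv_eq u v u hdet, CSadjugate]

lemma CSinv_three_three_eq :
    CSinv u v u 3 3 = (1 - cos (π/u)^2 - cos (π/v)^2) / (CSmatrix u v u).det := by
  rw [CSinv_eq u v u hdet, div_eq_inv_mul]
  rfl

lemma CSinv_one_two_add_two_two_eq :
    CSinv u v u 1 2 + CSinv u v u 2 2 =
      (cos (π/v) + (1 - cos (π/u)^2)) / (CSmatrix u v u).det := by
  rw [CSinv_eq u v u hdet, div_eq_inv_mul, mul_add]
  rfl

lemma CSinv_one_three_add_two_three :
    CSinv u v u 1 3 + CSinv u v u 2 3 = cos (π/u) * (CSinv u v u 1 2 + CSinv u v u 2 2) := by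
  simp [CSinv_eq u v u hdet, CSadjugate]
  ring

lemma CSinv_three_three_add_zero_three :
    CSinv u v u 3 3 + CSinv u v u 0 3 - 1 =
      cos (π/u)^2 * (CSinv u v u 1 2 + CSinv u v u 2 2) := by
  have h03 : CSinv u v u 0 3 =
      cos (π/u) * cos (π/v) * cos (π/u) / (CSmatrix u v u).det := by
    rw [CSinv_eq u v u hdet, div_eq_inv_mul]
    rfl
  rw [CSinv_three_three_eq hdet, CSinv_one_two_add_two_two_eq hdet, h03, ← add_div,
    div_sub_one hdet, mul_div_assoc']
  congr 1
  rw [det_CSmatrix]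
  ring

end SymmetricOrthoscheme

lemma neg_mul_div_sqrt_eq_sqrt {c s x y : ℝ} (hc : 0 ≤ c) (hs : s < 0) (hx : x < 0)
    (hxy : x + y - 1 = c^2 * s) :
    -(c * s) / √(2 * x * s) = √(1/2 + (y - 1) / (2 * x)) := by
  have hxs : 0 < 2 * x * s := by nlinarith
  have hlhs : 0 ≤ -(c * s) / √(2 * x * s) := div_nonneg (by nlinarith) (sqrt_nonneg _)
  have hsq : (-(c * s) / √(2 * x * s))^2 = 1/2 + (y - 1) / (2 * x) := by
    rw [div_pow, sq_sqrt hxs.le]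
    field_simp [hx.ne, hs.ne]
    linear_combination (-1) * hxy
  rw [← hsq, sqrt_sq hlhs]

theorem stmt11_general (u v w : ℝ) (hu : 3 ≤ u) (hv : 3 ≤ v)
    {V : Type*} [AddCommGroup V] [Module ℝ V]
    (Bf : LinearMap.BilinForm ℝ V)
    (a : Fin 4 → V)
    (hGram : ∀ i j : Fin 4, Bf (a i) (a j) = CSinv u v w i j)
    (huw : u = w) (hBneg : (CSmatrix u v w).det < 0)
    (h1 : cos (π/v) ^ 2 < sin (π/u) ^ 2)
    (f : V) (hf : f = a 1 + a 2) :
    CSinv u v w 3 3 < 0 ∧ CSinv u v w 1 2 + CSinv u v w 2 2 < 0 ∧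
    -Bf (a 3) f / Real.sqrt (Bf (a 3) (a 3) * Bf f f) =
      -(CSinv u v w 1 3 + CSinv u v w 2 3) /
        Real.sqrt (2 * CSinv u v w 3 3 * (CSinv u v w 1 2 + CSinv u v w 2 2)) ∧
    -(CSinv u v w 1 3 + CSinv u v w 2 3) /
        Real.sqrt (2 * CSinv u v w 3 3 * (CSinv u v w 1 2 + CSinv u v w 2 2)) =
      Real.sqrt (1/2 + (CSinv u v w 0 3 - 1) / (2 * CSinv u v w 3 3)) := by
  subst huw hf
  have hdet := hBneg.ne
  have hc := cos_pi_div_pos (x := u) (by linarith)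
  have hd := cos_pi_div_pos (x := v) (by linarith)
  have hk : 0 < 1 - cos (π/u)^2 - cos (π/v)^2 := by linarith [sin_sq (π/u)]
  have h33 : CSinv u v u 3 3 < 0 := by
    rw [CSinv_three_three_eq hdet]
    exact div_neg_of_pos_of_neg hk hBneg
  have hs : CSinv u v u 1 2 + CSinv u v u 2 2 < 0 := by
    rw [CSinv_one_two_add_two_two_eq hdet]
    exact div_neg_of_pos_of_neg (by linarith [sq_nonneg (cos (π/v))]) hBneg
  refine ⟨h33, hs, ?_, ?_⟩
  · have h3f : Bf (a 3) (a 1 + a 2) = CSinv u v u 1 3 + CSinv u v u 2 3 := by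
      rw [map_add, hGram, hGram, CSinv_apply_comm u v u 3, CSinv_apply_comm u v u 3]
    have hff : Bf (a 1 + a 2) (a 1 + a 2) = 2 * (CSinv u v u 1 2 + CSinv u v u 2 2) := by
      simp only [map_add, LinearMap.add_apply, hGram, CSinv_apply_comm u v u 2 1,
        CSinv_one_one_eq_two_two hdet]
      ring
    rw [h3f, hff, hGram]
    ring_nf
  · rw [CSinv_one_three_add_two_three hdet]
    exact neg_mul_div_sqrt_eq_sqrt hc.le hs h33 (CSinv_three_three_add_zero_three hdet)

theorem stmt11 (u v w : ℝ) (hu : 3 ≤ u) (hv : 3 ≤ v) (hw : 3 ≤ w)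
    (hdet : (CSmatrix u v w).det ≠ 0)
    {V : Type*} [AddCommGroup V] [Module ℝ V]
    (Bf : LinearMap.BilinForm ℝ V)
    (hsymm : ∀ x y : V, Bf x y = Bf y x)
    (a : Fin 4 → V)
    (hGram : ∀ i j : Fin 4, Bf (a i) (a j) = CSinv u v w i j)
    (huw : u = w) (hBneg : (CSmatrix u v w).det < 0)
    (h1 : cos (π/v) ^ 2 < sin (π/u) ^ 2)
    (f : V) (hf : f = a 1 + a 2) :
    CSinv u v w 3 3 < 0 ∧ CSinv u v w 1 2 + CSinv u v w 2 2 < 0 ∧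
    -Bf (a 3) f / Real.sqrt (Bf (a 3) (a 3) * Bf f f) =
      -(CSinv u v w 1 3 + CSinv u v w 2 3) /
        Real.sqrt (2 * CSinv u v w 3 3 * (CSinv u v w 1 2 + CSinv u v w 2 2)) ∧
    -(CSinv u v w 1 3 + CSinv u v w 2 3) /
        Real.sqrt (2 * CSinv u v w 3 3 * (CSinv u v w 1 2 + CSinv u v w 2 2)) =
      Real.sqrt (1/2 + (CSinv u v w 0 3 - 1) / (2 * CSinv u v w 3 3)) :=
  stmt11_general u v w hu hv Bf a hGram huw hBneg h1 f hf
end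

section
/- (Point-to-plane distance (4.5), vertex A₂ to the face with pole b²) Assume B < 0, so a₂₂ < 0, and let b² = −cos(π/v)·a₁ + a₂ − cos(π/w)·a₃. Then ⟨a₂, b²⟩ = 1 and ⟨b², b²⟩ = 1, the perpendicular foot of A₂ on this plane is y = a₂ − b², and −⟨a₂, y⟩/√(⟨a₂,a₂⟩·⟨y,y⟩) = √(1 − 1/a₂₂). (This quantity is cosh of the hyperbolic distance from the vertex A₂ to its opposite face plane of W_{uvw}.) -/
open Real Matrix

namespace LinearMap.BilinForm

section Gram

variable {R V n : Type*} [CommRing R] [AddCommGroup V] [Module R V] [Fintype n]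
  (Bf : LinearMap.BilinForm R V) {a : n → V}

theorem apply_sum_smul_eq_mulVec {G : Matrix n n R} (hG : ∀ i j, Bf (a i) (a j) = G i j)
    (c : n → R) (i : n) : Bf (a i) (∑ j, c j • a j) = (G *ᵥ c) i := by
  simp [hG, mulVec, dotProduct, mul_comm]

variable [DecidableEq n] {M : Matrix n n R} (hM : IsUnit M.det)
  (hG : ∀ i j, Bf (a i) (a j) = M⁻¹ i j)
include hM hG

theorem apply_sum_col_of_gram_inv (i k : n) :
    Bf (a i) (∑ j, M j k • a j) = (1 : Matrix n n R) i k := by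
  rw [apply_sum_smul_eq_mulVec Bf hG, ← nonsing_inv_mul M hM]
  rfl

theorem sum_col_apply_sum_col_of_gram_inv (k : n) :
    Bf (∑ j, M j k • a j) (∑ j, M j k • a j) = M k k := by
  rw [map_sum Bf, LinearMap.sum_apply]
  simp only [map_smul, LinearMap.smul_apply, apply_sum_col_of_gram_inv Bf hM hG, smul_eq_mul,
    one_apply, mul_ite, mul_one, mul_zero, Finset.sum_ite_eq', Finset.mem_univ, if_true]

end Gram

theorem neg_apply_sub_div_sqrt {V : Type*} [AddCommGroup V] [Module ℝ V]
    (Bf : LinearMap.BilinForm ℝ V) {x b : V} {s : ℝ} (hs : s < 0)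
    (hxx : Bf x x = s) (hxb : Bf x b = 1) (hbx : Bf b x = 1) (hbb : Bf b b = 1) :
    -Bf x (x - b) / √(Bf x x * Bf (x - b) (x - b)) = √(1 - 1 / s) := by
  have hs1 : s - 1 < 0 := by linarith
  have hxbxb : Bf (x - b) (x - b) = s - 1 := by
    simp only [map_sub, LinearMap.sub_apply, hxx, hxb, hbx, hbb]; ring
  have h1s : 1 - 1 / s = (1 - s) ^ 2 / (s * (s - 1)) := by
    field_simp [hs.ne, hs1.ne]; ring
  rw [map_sub, hxx, hxb, hxbxb, h1s, sqrt_div (sq_nonneg _), sqrt_sq (by linarith), neg_sub]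

end LinearMap.BilinForm

theorem CSmatrix_adjugate_two_two (u v w : ℝ) :
    (CSmatrix u v w).adjugate 2 2 = sin (π / u) ^ 2 := by
  rw [Matrix.adjugate_apply, sin_sq]
  simp [Matrix.det_succ_row_zero, Fin.sum_univ_succ, CSmatrix, Matrix.updateRow_apply,
      Fin.ext_iff, Pi.single_apply, Fin.succAbove]
  ring

theorem CSinv_two_two (u v w : ℝ) :
    CSinv u v w 2 2 = sin (π / u) ^ 2 / (CSmatrix u v w).det := by
  simp [CSinv, Matrix.inv_def, CSmatrix_adjugate_two_two, Ring.inverse_eq_inv', div_eq_inv_mul]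

theorem CSinv_two_two_neg {u v w : ℝ} (hu : 1 < u) (hB : (CSmatrix u v w).det < 0) :
    CSinv u v w 2 2 < 0 := by
  have : 0 < sin (π / u) :=
    sin_pos_of_pos_of_lt_pi (by positivity) (div_lt_self pi_pos hu)
  rw [CSinv_two_two]
  exact div_neg_of_pos_of_neg (by positivity) hB

theorem CSmatrix_col_two_smul {V : Type*} [AddCommGroup V] [Module ℝ V] (u v w : ℝ)
    (a : Fin 4 → V) :
    ∑ j, CSmatrix u v w j 2 • a j = (-cos (π/v)) • a 1 + a 2 - cos (π/w) • a 3 := by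
  simp [Fin.sum_univ_four, CSmatrix, sub_eq_add_neg]

theorem stmt12_general (u v w : ℝ) (hu : 3 ≤ u)
    {V : Type*} [AddCommGroup V] [Module ℝ V]
    (Bf : LinearMap.BilinForm ℝ V)
    (hsymm : ∀ x y : V, Bf x y = Bf y x)
    (a : Fin 4 → V)
    (hGram : ∀ i j : Fin 4, Bf (a i) (a j) = CSinv u v w i j)
    (hBneg : (CSmatrix u v w).det < 0)
    (b2 : V) (hb2 : b2 = (-cos (π/v)) • a 1 + a 2 - cos (π/w) • a 3) :
    CSinv u v w 2 2 < 0 ∧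
    Bf (a 2) b2 = 1 ∧ Bf b2 b2 = 1 ∧
    a 2 - (Bf (a 2) b2 / Bf b2 b2) • b2 = a 2 - b2 ∧
    -Bf (a 2) (a 2 - b2) / Real.sqrt (Bf (a 2) (a 2) * Bf (a 2 - b2) (a 2 - b2)) =
      Real.sqrt (1 - 1 / CSinv u v w 2 2) := by
  have hB : IsUnit (CSmatrix u v w).det := hBneg.ne.isUnit
  rw [← CSmatrix_col_two_smul] at hb2
  have hab : Bf (a 2) b2 = 1 := by
    rw [hb2, Bf.apply_sum_col_of_gram_inv hB hGram, one_apply_eq]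
  have hbb : Bf b2 b2 = 1 := by
    rw [hb2, Bf.sum_col_apply_sum_col_of_gram_inv hB hGram]
    simp [CSmatrix]
  have ha22 : CSinv u v w 2 2 < 0 := CSinv_two_two_neg (by linarith) hBneg
  refine ⟨ha22, hab, hbb, by rw [hab, hbb, div_one, one_smul], ?_⟩
  exact Bf.neg_apply_sub_div_sqrt ha22 (hGram 2 2) hab (by rw [hsymm, hab]) hbb

theorem stmt12 (u v w : ℝ) (hu : 3 ≤ u) (hv : 3 ≤ v) (hw : 3 ≤ w)
    (hdet : (CSmatrix u v w).det ≠ 0)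
    {V : Type*} [AddCommGroup V] [Module ℝ V]
    (Bf : LinearMap.BilinForm ℝ V)
    (hsymm : ∀ x y : V, Bf x y = Bf y x)
    (a : Fin 4 → V)
    (hGram : ∀ i j : Fin 4, Bf (a i) (a j) = CSinv u v w i j)
    (hBneg : (CSmatrix u v w).det < 0)
    (b2 : V) (hb2 : b2 = (-cos (π/v)) • a 1 + a 2 - cos (π/w) • a 3) :
    CSinv u v w 2 2 < 0 ∧
    Bf (a 2) b2 = 1 ∧ Bf b2 b2 = 1 ∧
    a 2 - (Bf (a 2) b2 / Bf b2 b2) • b2 = a 2 - b2 ∧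
    -Bf (a 2) (a 2 - b2) / Real.sqrt (Bf (a 2) (a 2) * Bf (a 2 - b2) (a 2 - b2)) =
      Real.sqrt (1 - 1 / CSinv u v w 2 2) :=
  stmt12_general u v w hu Bf hsymm a hGram hBneg b2 hb2
end

section
/- (Point-to-plane distance (4.8), F₁₂ to the face with pole b²) Assume u = w and B < 0, and let f₁₂ = a₁ + a₂ and b² = −cos(π/v)·a₁ + a₂ − cos(π/w)·a₃. Then ⟨f₁₂, b²⟩ = 1, ⟨b², b²⟩ = 1, ⟨f₁₂, f₁₂⟩ = 2(a₁₁ + a₁₂) < 0, and 1 − 1/(2(a₁₁ + a₁₂)) = 1 + (cos(π/v) − sin²(π/u))/2. (The left-hand side is cosh² of the hyperbolic distance from the point F₁₂ to the plane with pole b², since sinh² of that distance equals ⟨f₁₂,b²⟩²/(−⟨f₁₂,f₁₂⟩·⟨b²,b²⟩).) -/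
open Real Matrix

lemma CS_det_uvu (u v : ℝ) : (CSmatrix u v u).det = (1 - cos (π/u)^2)^2 - cos (π/v)^2 := by
  simp [CSmatrix, Matrix.det_succ_row_zero, Fin.sum_univ_succ, Fin.succAbove]
  ring

lemma CSinv_11 (u v : ℝ) :
    CSinv u v u 1 1 = (1 - cos (π/u)^2) / (CSmatrix u v u).det := by
  rw [CSinv, Matrix.inv_def, Matrix.smul_apply, Matrix.adjugate_apply,
    Ring.inverse_eq_inv, div_eq_inv_mul]
  congr 1
  simp [CSmatrix, Matrix.det_succ_row_zero, Fin.sum_univ_succ, Fin.succAbove,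
    Matrix.updateRow_apply, Pi.single_apply]
  norm_num [Fin.succ, Fin.ext_iff]
  ring

lemma CSinv_12 (u v : ℝ) :
    CSinv u v u 1 2 = cos (π/v) / (CSmatrix u v u).det := by
  rw [CSinv, Matrix.inv_def, Matrix.smul_apply, Matrix.adjugate_apply,
    Ring.inverse_eq_inv, div_eq_inv_mul]
  congr 1
  simp [CSmatrix, Matrix.det_succ_row_zero, Fin.sum_univ_succ, Fin.succAbove,
    Matrix.updateRow_apply, Pi.single_apply]

theorem stmt17 (u v w : ℝ) (hu : 3 ≤ u) (hv : 3 ≤ v) (hw : 3 ≤ w)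
    (hdet : (CSmatrix u v w).det ≠ 0)
    {V : Type*} [AddCommGroup V] [Module ℝ V]
    (Bf : LinearMap.BilinForm ℝ V)
    (hsymm : ∀ x y : V, Bf x y = Bf y x)
    (a : Fin 4 → V)
    (hGram : ∀ i j : Fin 4, Bf (a i) (a j) = CSinv u v w i j)
    (huw : u = w) (hBneg : (CSmatrix u v w).det < 0)
    (f b2 : V) (hf : f = a 1 + a 2)
    (hb2 : b2 = (-cos (π/v)) • a 1 + a 2 - cos (π/w) • a 3) :
    Bf f b2 = 1 ∧ Bf b2 b2 = 1 ∧
    Bf f f = 2 * (CSinv u v w 1 1 + CSinv u v w 1 2) ∧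
    2 * (CSinv u v w 1 1 + CSinv u v w 1 2) < 0 ∧
    1 - 1 / (2 * (CSinv u v w 1 1 + CSinv u v w 1 2)) =
      1 + (cos (π/v) - sin (π/u) ^ 2) / 2 := by
  subst huw
  set p := cos (π/u) with hp
  set q := cos (π/v) with hq
  have hdv : (CSmatrix u v u).det = (1 - p^2)^2 - q^2 := CS_det_uvu u v
  -- key: Bf (a i) b2 = (CSinv * CSmatrix) i 2
  have hmul : CSinv u v u * CSmatrix u v u = 1 :=
    Matrix.nonsing_inv_mul _ (isUnit_iff_ne_zero.mpr hdet)
  have key : ∀ i : Fin 4, Bf (a i) b2 = (CSinv u v u * CSmatrix u v u) i 2 := by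
    intro i
    rw [hb2]
    simp only [map_sub, map_add, _root_.map_smul, smul_eq_mul, hGram, Matrix.mul_apply,
      Fin.sum_univ_four]
    simp [CSmatrix]
    rw [hp, hq]
    ring
  have k1 : Bf (a 1) b2 = 0 := by rw [key, hmul]; simp [Matrix.one_apply]
  have k2 : Bf (a 2) b2 = 1 := by rw [key, hmul]; simp [Matrix.one_apply]
  have k3 : Bf (a 3) b2 = 0 := by rw [key, hmul]; simp [Matrix.one_apply]
  have part1 : Bf f b2 = 1 := by
    rw [hf, map_add, LinearMap.add_apply, k1, k2]; ring
  have part2 : Bf b2 b2 = 1 := by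
    nth_rewrite 1 [hb2]
    simp only [map_sub, map_add, _root_.map_smul, LinearMap.sub_apply, LinearMap.add_apply,
      LinearMap.smul_apply, smul_eq_mul, k1, k2, k3]
    ring
  -- symmetry of CSinv entries : CSinv 2 1 = CSinv 1 2
  have hsymm12 : CSinv u v u 2 1 = CSinv u v u 1 2 := by
    rw [← hGram, ← hGram, hsymm]
  have hsymm22 : CSinv u v u 2 2 = CSinv u v u 1 1 := by
    -- a22 via : a22 = Bf b2 b2 relation? easier: compute directly
    rw [CSinv, Matrix.inv_def]
    simp only [Matrix.smul_apply, Matrix.adjugate_apply]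
    congr 1
    simp [CSmatrix, Matrix.det_succ_row_zero, Fin.sum_univ_succ, Fin.succAbove,
      Matrix.updateRow_apply, Pi.single_apply]
  have part3 : Bf f f = 2 * (CSinv u v u 1 1 + CSinv u v u 1 2) := by
    rw [hf]
    simp only [map_add, LinearMap.add_apply, hGram]
    rw [hsymm12, hsymm22]; ring
  -- positivity facts
  have hq_pos : 0 < q := by
    rw [hq]
    apply Real.cos_pos_of_mem_Ioo
    constructor
    · have : 0 < π / v := div_pos Real.pi_pos (by linarith)
      linarith [Real.pi_pos]
    · calc π / v ≤ π / 3 := by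
            apply div_le_div_of_nonneg_left Real.pi_pos.le (by norm_num) hv
        _ < π / 2 := by
            apply div_lt_div_of_pos_left Real.pi_pos (by norm_num) (by norm_num)
  have hp_sq : p^2 ≤ 1 := by
    rw [hp]
    nlinarith [Real.neg_one_le_cos (π/u), Real.cos_le_one (π/u)]
  have hnum_pos : 0 < 1 - p^2 + q := by linarith
  have hsum : CSinv u v u 1 1 + CSinv u v u 1 2 = (1 - p^2 + q) / (CSmatrix u v u).det := by
    rw [CSinv_11, CSinv_12]; ring
  have part4 : 2 * (CSinv u v u 1 1 + CSinv u v u 1 2) < 0 := by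
    rw [hsum]
    have : (1 - p^2 + q) / (CSmatrix u v u).det < 0 :=
      div_neg_of_pos_of_neg hnum_pos hBneg
    linarith
  refine ⟨part1, part2, part3, part4, ?_⟩
  have hsin : sin (π/u)^2 = 1 - p^2 := by
    rw [hp, Real.sin_sq]
  rw [hsum, hsin, hdv]
  have h1 : (1 - p^2 + q) ≠ 0 := ne_of_gt hnum_pos
  have h2 : (1 - p^2)^2 - q^2 ≠ 0 := by rw [← hdv]; exact hdet
  field_simp
  ring
end
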